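/- Let n ≥ 1, let G be the Heisenberg group over ℤ/nℤ (triples (a,b,c) ∈ (ℤ/nℤ)³ with multiplication (a,b,c)(a',b',c') = (a+a', b+b', c+c'+ab')) with center N ≅ ℤ/nℤ generated by z := (0,0,1). Suppose k contains a primitive n-th root of unity ζ, and let V_ζ be an irreducible finite-dimensional k-representation of G on which z acts by the scalar ζ. Then the natural k-algebra homomorphism k[G] → End_k(V_ζ) is surjective and its kernel is the two-sided ideal I_ζ of k[G] generated by the element z − ζ·1; hence it induces a k-algebra isomorphism k[G]/I_ζ ≅ End_k(V_ζ). -/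

import Mathlib

/-- The Heisenberg group over `ℤ/nℤ`: triples `(a, b, c)` with multiplication
`(a,b,c)(a',b',c') = (a+a', b+b', c+c'+ab')`. -/
@[ext]
structure Heis (n : ℕ) where
  a : ZMod n
  b : ZMod n
  c : ZMod n

namespace Heis

variable {n : ℕ}

instance : Mul (Heis n) :=
  ⟨fun x y => ⟨x.a + y.a, x.b + y.b, x.c + y.c + x.a * y.b⟩⟩

instance : One (Heis n) := ⟨⟨0, 0, 0⟩⟩

instance : Inv (Heis n) :=
  ⟨fun x => ⟨-x.a, -x.b, -x.c + x.a * x.b⟩⟩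

@[simp] lemma mul_a (x y : Heis n) : (x * y).a = x.a + y.a := rfl
@[simp] lemma mul_b (x y : Heis n) : (x * y).b = x.b + y.b := rfl
@[simp] lemma mul_c (x y : Heis n) : (x * y).c = x.c + y.c + x.a * y.b := rfl
@[simp] lemma one_a : (1 : Heis n).a = 0 := rfl
@[simp] lemma one_b : (1 : Heis n).b = 0 := rfl
@[simp] lemma one_c : (1 : Heis n).c = 0 := rfl
@[simp] lemma inv_a (x : Heis n) : x⁻¹.a = -x.a := rfl
@[simp] lemma inv_b (x : Heis n) : x⁻¹.b = -x.b := rfl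
@[simp] lemma inv_c (x : Heis n) : x⁻¹.c = -x.c + x.a * x.b := rfl

instance instGroup : Group (Heis n) where
  mul_assoc x y z := by ext <;> simp <;> ring
  one_mul x := by ext <;> simp
  mul_one x := by ext <;> simp
  inv_mul_cancel x := by ext <;> simp

end Heis

namespace Heis
variable {n : ℕ}

lemma z_pow (m : ℕ) : (⟨0,0,1⟩ : Heis n) ^ m = ⟨0, 0, (m : ZMod n)⟩ := by
  induction m with
  | zero => ext <;> simp
  | succ m ih => rw [pow_succ, ih]; ext <;> simp

lemma x_pow (m : ℕ) : (⟨1,0,0⟩ : Heis n) ^ m = ⟨(m : ZMod n), 0, 0⟩ := by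
  induction m with
  | zero => ext <;> simp
  | succ m ih => rw [pow_succ, ih]; ext <;> simp

lemma y_pow (m : ℕ) : (⟨0,1,0⟩ : Heis n) ^ m = ⟨0, (m : ZMod n), 0⟩ := by
  induction m with
  | zero => ext <;> simp
  | succ m ih => rw [pow_succ, ih]; ext <;> simp

lemma decomp [NeZero n] (g : Heis n) :
    g = (⟨0,0,1⟩ : Heis n) ^ (g.c - g.a * g.b).val *
      ((⟨1,0,0⟩ : Heis n) ^ g.a.val * (⟨0,1,0⟩ : Heis n) ^ g.b.val) := by
  rw [z_pow, x_pow, y_pow]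
  ext <;> simp [ZMod.natCast_val, ZMod.cast_id]

lemma xy_rel : (⟨1,0,0⟩ : Heis n) * ⟨0,1,0⟩ = ⟨0,0,1⟩ * (⟨0,1,0⟩ * ⟨1,0,0⟩) := by
  ext <;> simp

end Heis
/-- Irreducibility of a representation: the space is nonzero and has no nontrivial
invariant subspace. -/
def IrredRep {k G V : Type} [CommRing k] [Monoid G] [AddCommGroup V] [Module k V]
    (ρ : Representation k G V) : Prop :=
  Nontrivial V ∧ ∀ p : Submodule k V, (∀ g : G, ∀ v ∈ p, ρ g v ∈ p) → p = ⊥ ∨ p = ⊤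

/-- Let `G` be the Heisenberg group over `ℤ/nℤ` with central generator
`z = (0,0,1)`, let `ζ ∈ k` be a primitive `n`-th root of unity, and let `V_ζ` be an
irreducible finite-dimensional representation of `G` on which `z` acts by the scalar `ζ`.
Then the natural algebra map `k[G] → End_k(V_ζ)` is surjective, and its kernel is the
two-sided ideal generated by `z - ζ·1`; hence `k[G]/I_ζ ≅ End_k(V_ζ)`. -/
theorem stmt_9 (k : Type) [Field k] [CharZero k] (n : ℕ) (hn : 0 < n)
    (ζ : k) (hζ : IsPrimitiveRoot ζ n)
    (V : FDRep k (Heis n)) (hirr : IrredRep V.ρ)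
    (hz : V.ρ ⟨0, 0, 1⟩ = ζ • LinearMap.id) :
    Function.Surjective (Representation.asAlgebraHom V.ρ) ∧
      TwoSidedIdeal.ker (Representation.asAlgebraHom V.ρ).toRingHom =
        TwoSidedIdeal.span
          {MonoidAlgebra.of k (Heis n) ⟨0, 0, 1⟩ - algebraMap k (MonoidAlgebra k (Heis n)) ζ} := by
  haveI : NeZero n := ⟨hn.ne'⟩
  haveI : Nontrivial V := hirr.1
  classical
  set ρ := V.ρ with hρ
  set X : Module.End k V := ρ ⟨1,0,0⟩ with hX
  set Y : Module.End k V := ρ ⟨0,1,0⟩ with hY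
  -- basic relations
  have hXn : X ^ n = 1 := by
    rw [hX, ← map_pow, Heis.x_pow, ZMod.natCast_self]
    exact map_one ρ
  have hYn : Y ^ n = 1 := by
    rw [hY, ← map_pow, Heis.y_pow, ZMod.natCast_self]
    exact map_one ρ
  have hcomm : X * Y = ζ • (Y * X) := by
    rw [hX, hY, ← map_mul, Heis.xy_rel, map_mul, hz, smul_mul_assoc]
    congr 1
    rw [map_mul]
    exact LinearMap.id_comp _
  -- existence of an eigenvector of X
  obtain ⟨lam, hlamn, v, hv0, hXv⟩ :
      ∃ lam : k, lam ^ n = 1 ∧ ∃ v : V, v ≠ 0 ∧ X v = lam • v := by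
    have hXint : IsIntegral k X := Algebra.IsIntegral.isIntegral X
    have hdvd : minpoly k X ∣ Polynomial.X ^ n - 1 := by
      apply minpoly.dvd
      simp [hXn]
    have hXn1ne : (Polynomial.X ^ n - 1 : Polynomial k) ≠ 0 := by
      intro h
      have := congrArg (Polynomial.eval 0) h
      simp [zero_pow hn.ne'] at this
    have hsplit : ((Polynomial.X : Polynomial k) ^ n - 1).Splits := by
      rw [Polynomial.X_pow_sub_one_eq_prod hn hζ]
      exact Polynomial.Splits.prod fun c _ => Polynomial.Splits.X_sub_C _
    have hmsplit := Polynomial.Splits.of_dvd hsplit hXn1ne hdvd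
    obtain ⟨lam, hlam⟩ := Polynomial.Splits.exists_eval_eq_zero hmsplit
      (by
        have := minpoly.degree_pos hXint
        intro h; rw [h] at this; exact absurd this (by simp))
    have hlam : Polynomial.eval lam (minpoly k X) = 0 := hlam
    have heig := Module.End.hasEigenvalue_of_isRoot (f := X) (μ := lam) hlam
    obtain ⟨v, hvmem, hv0⟩ := heig.exists_hasEigenvector
    refine ⟨lam, ?_, v, hv0, Module.End.mem_eigenspace_iff.1 hvmem⟩
    have : Polynomial.eval lam (Polynomial.X ^ n - 1) = 0 := by
      obtain ⟨q, hq⟩ := hdvd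
      rw [hq, Polynomial.eval_mul, hlam, zero_mul]
    simpa [sub_eq_zero] using this
  have hlam0 : lam ≠ 0 := by
    intro h
    rw [h, zero_pow hn.ne'] at hlamn
    exact zero_ne_one hlamn
  have hcommpow : ∀ m : ℕ, X * Y ^ m = (ζ ^ m) • (Y ^ m * X) := by
    intro m
    induction m with
    | zero => simp
    | succ m ih =>
      rw [pow_succ, ← mul_assoc, ih, smul_mul_assoc, mul_assoc, hcomm, mul_smul_comm,
        smul_smul, ← mul_assoc, ← pow_succ]
  set w : ℕ → V := fun m => (Y ^ m) v with hwdef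
  set μ : ℕ → k := fun m => ζ ^ m * lam with hμdef
  have hXw : ∀ m, X (w m) = μ m • w m := by
    intro m
    have h1 := congrArg (fun f : Module.End k V => f v) (hcommpow m)
    simp only [Module.End.mul_apply, LinearMap.smul_apply] at h1
    rw [hXv, map_smul, smul_smul] at h1
    exact h1
  have hYinj : Function.Injective Y := by
    have h1 : Y ^ (n - 1) * Y = 1 := by
      rw [← pow_succ, Nat.sub_add_cancel hn]
      exact hYn
    intro a c hac
    have h2 : ∀ u : V, (Y ^ (n - 1)) (Y u) = u := by
      intro u
      have := congrArg (fun f : Module.End k V => f u) h1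
      simpa [Module.End.mul_apply] using this
    rw [← h2 a, ← h2 c, hac]
  have hwsucc : ∀ m, w (m + 1) = Y (w m) := by
    intro m
    simp only [hwdef, pow_succ', Module.End.mul_apply]
  have hwper : ∀ m, w (m + n) = w m := by
    intro m
    simp only [hwdef, pow_add, Module.End.mul_apply, hYn, Module.End.one_apply]
  have hwqn : ∀ (q m : ℕ), w (m + q * n) = w m := by
    intro q
    induction q with
    | zero => simp
    | succ q ih =>
      intro m
      have : m + (q + 1) * n = (m + q * n) + n := by ring
      rw [this, hwper, ih]
  have hwne : ∀ m, w m ≠ 0 := by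
    intro m
    induction m with
    | zero => simpa [hwdef] using hv0
    | succ m ih =>
      rw [hwsucc]
      intro h
      exact ih (hYinj (by simpa using h))
  have hμinj : ∀ i < n, ∀ j < n, μ i = μ j → i = j := by
    intro i hi j hj hij
    exact hζ.pow_inj hi hj (mul_right_cancel₀ hlam0 hij)
  set b : Fin n → V := fun j => w j with hbdef
  have hindep : LinearIndependent k b := by
    refine Module.End.eigenvectors_linearIndependent' X (fun j : Fin n => μ j)
      (fun i j hij => Fin.ext (hμinj i i.isLt j j.isLt hij)) b (fun j => ?_)
    exact ⟨Module.End.mem_eigenspace_iff.2 (hXw j), hwne j⟩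
  set P := Submodule.span k (Set.range b) with hPdef
  have hbP : ∀ j : Fin n, b j ∈ P := fun j => Submodule.subset_span ⟨j, rfl⟩
  have hvP : v ∈ P := by
    have : b ⟨0, hn⟩ = v := by simp [hbdef, hwdef]
    exact this ▸ hbP ⟨0, hn⟩
  have hwP : ∀ m, w m ∈ P := by
    intro m
    induction m using Nat.strong_induction_on with
    | _ m ih =>
      rcases lt_or_ge m n with h | h
      · exact hbP ⟨m, h⟩
      · have hm : w m = w (m - n) := by
          conv_lhs => rw [show m = (m - n) + n by omega]
          exact hwper _
        rw [hm]
        exact ih _ (by omega)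
  have hXP : ∀ u ∈ P, X u ∈ P := by
    have hm : P.map X ≤ P := by
      rw [hPdef, Submodule.map_span, Submodule.span_le]
      rintro _ ⟨_, ⟨j, rfl⟩, rfl⟩
      have : X (b j) = μ j • b j := hXw j
      rw [SetLike.mem_coe, this]
      exact Submodule.smul_mem _ _ (hbP j)
    exact fun u hu => hm (Submodule.mem_map_of_mem hu)
  have hYP : ∀ u ∈ P, Y u ∈ P := by
    have hm : P.map Y ≤ P := by
      rw [hPdef, Submodule.map_span, Submodule.span_le]
      rintro _ ⟨_, ⟨j, rfl⟩, rfl⟩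
      have : Y (b j) = w ((j : ℕ) + 1) := (hwsucc j).symm
      rw [SetLike.mem_coe, this]
      exact hwP _
    exact fun u hu => hm (Submodule.mem_map_of_mem hu)
  have hXpowP : ∀ (m : ℕ), ∀ u ∈ P, (X ^ m) u ∈ P := by
    intro m
    induction m with
    | zero => intro u hu; simpa using hu
    | succ m ih =>
      intro u hu
      rw [pow_succ', Module.End.mul_apply]
      exact hXP _ (ih u hu)
  have hYpowP : ∀ (m : ℕ), ∀ u ∈ P, (Y ^ m) u ∈ P := by
    intro m
    induction m with
    | zero => intro u hu; simpa using hu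
    | succ m ih =>
      intro u hu
      rw [pow_succ', Module.End.mul_apply]
      exact hYP _ (ih u hu)
  have hinvP : ∀ g : Heis n, ∀ u ∈ P, ρ g u ∈ P := by
    intro g u hu
    rw [show g = (⟨0,0,1⟩ : Heis n) ^ (g.c - g.a * g.b).val *
        ((⟨1,0,0⟩ : Heis n) ^ g.a.val * (⟨0,1,0⟩ : Heis n) ^ g.b.val) from Heis.decomp g]
    rw [map_mul, map_mul, map_pow, map_pow, map_pow, hz]
    simp only [Module.End.mul_apply, smul_pow, LinearMap.smul_apply]
    rw [show (LinearMap.id : Module.End k V) ^ (g.c - g.a * g.b).val = 1 by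
      rw [show (LinearMap.id : Module.End k V) = 1 from rfl, one_pow]]
    rw [Module.End.one_apply]
    exact Submodule.smul_mem _ _ (hXpowP _ _ (hYpowP _ _ hu))
  have hPtop : P = ⊤ := by
    rcases hirr.2 P hinvP with h | h
    · rw [h] at hvP
      exact absurd ((Submodule.mem_bot k).1 hvP) hv0
    · exact h
  let B : Module.Basis (Fin n) k V := Module.Basis.mk hindep (by rw [← hPdef]; exact hPtop.ge)
  have hBcoe : ∀ j, B j = b j := fun j => Module.Basis.mk_apply hindep _ j
  have hdim : Module.finrank k V = n := by
    rw [Module.finrank_eq_card_basis B, Fintype.card_fin]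
  -- surjectivity
  set S := (Representation.asAlgebraHom V.ρ).range with hSdef
  have hXS : X ∈ S := ⟨MonoidAlgebra.of k (Heis n) ⟨1,0,0⟩, Representation.asAlgebraHom_of _ _⟩
  have hYS : Y ∈ S := ⟨MonoidAlgebra.of k (Heis n) ⟨0,1,0⟩, Representation.asAlgebraHom_of _ _⟩
  have hscalS : ∀ c : k, (c • 1 : Module.End k V) ∈ S := by
    intro c
    have := S.algebraMap_mem c
    rwa [Module.algebraMap_end_eq_smul_id, show (LinearMap.id : Module.End k V) = 1 from rfl]
      at this
  set d : k := ∏ i ∈ (Finset.range n).erase 0, (μ 0 - μ i) with hddef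
  have hdne : d ≠ 0 := by
    rw [hddef]
    refine Finset.prod_ne_zero_iff.2 fun i hi => sub_ne_zero.2 fun h => ?_
    obtain ⟨hi0, hir⟩ := Finset.mem_erase.1 hi
    exact hi0 (hμinj 0 hn i (Finset.mem_range.1 hir) h).symm
  set q0 : Polynomial k := ∏ i ∈ (Finset.range n).erase 0, (Polynomial.X - Polynomial.C (μ i))
    with hq0def
  set P0 : Module.End k V := d⁻¹ • Polynomial.aeval X q0 with hP0def
  have haeval : ∀ (p : Polynomial k) (c : k) (u : V), X u = c • u →
      (Polynomial.aeval X p) u = p.eval c • u := by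
    intro p c u hu
    have hpow : ∀ m : ℕ, (X ^ m) u = c ^ m • u := by
      intro m
      induction m with
      | zero => simp
      | succ m ih =>
        rw [pow_succ', Module.End.mul_apply, ih, map_smul, hu, smul_smul, ← pow_succ]
    induction p using Polynomial.induction_on' with
    | add p q hp hq =>
      rw [map_add, LinearMap.add_apply, hp, hq, Polynomial.eval_add, add_smul]
    | monomial m a =>
      rw [Polynomial.aeval_monomial, Polynomial.eval_monomial, Module.End.mul_apply, hpow,
        map_smul, Module.algebraMap_end_apply, smul_smul, mul_comm]
  have haevalS : ∀ p : Polynomial k, Polynomial.aeval X p ∈ S := by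
    intro p
    induction p using Polynomial.induction_on' with
    | add p q hp hq => rw [map_add]; exact Subalgebra.add_mem _ hp hq
    | monomial m a =>
      rw [Polynomial.aeval_monomial]
      exact Subalgebra.mul_mem _ (S.algebraMap_mem a) (Subalgebra.pow_mem _ hXS _)
  have hq0eval : ∀ c : k, q0.eval c = ∏ i ∈ (Finset.range n).erase 0, (c - μ i) := by
    intro c
    rw [hq0def, Polynomial.eval_prod]
    refine Finset.prod_congr rfl fun i _ => ?_
    rw [Polynomial.eval_sub, Polynomial.eval_X, Polynomial.eval_C]
  have hP0v : P0 v = v := by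
    have hXv' : X v = μ 0 • v := by
      rw [hμdef]
      simpa using hXv
    rw [hP0def, LinearMap.smul_apply, haeval _ (μ 0) v hXv', hq0eval, ← hddef, smul_smul,
      inv_mul_cancel₀ hdne, one_smul]
  have hP0w : ∀ r, r ≠ 0 → r < n → P0 (w r) = 0 := by
    intro r h0 hr
    rw [hP0def, LinearMap.smul_apply, haeval _ (μ r) _ (hXw r), hq0eval,
      Finset.prod_eq_zero (Finset.mem_erase.2 ⟨h0, Finset.mem_range.2 hr⟩) (by simp),
      zero_smul, smul_zero]
  have hP0S : P0 ∈ S := Subalgebra.smul_mem _ (haevalS q0) _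
  set E : Fin n → Fin n → Module.End k V :=
    fun i j => Y ^ (i : ℕ) * (P0 * Y ^ (n - (j : ℕ))) with hEdef
  have hES : ∀ i j, E i j ∈ S := fun i j =>
    Subalgebra.mul_mem _ (Subalgebra.pow_mem _ hYS _)
      (Subalgebra.mul_mem _ hP0S (Subalgebra.pow_mem _ hYS _))
  have hEw : ∀ i j l : Fin n, E i j (b l) = if l = j then b i else 0 := by
    intro i j l
    have h1 : E i j (b l) = (Y ^ (i : ℕ)) (P0 (w (n - (j : ℕ) + (l : ℕ)))) := by
      rw [hEdef]
      simp only [Module.End.mul_apply]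
      congr 1
      congr 1
      rw [hbdef]
      simp only [hwdef, ← Module.End.mul_apply, ← pow_add]
    rcases eq_or_ne l j with rfl | hlj
    · have h2 : n - (l : ℕ) + (l : ℕ) = 0 + 1 * n := by
        have := l.isLt
        omega
      rw [h1, h2, hwqn, if_pos rfl, show w 0 = v by simp [hwdef], hP0v]
    · rw [if_neg hlj, h1]
      set m := n - (j : ℕ) + (l : ℕ) with hmdef
      have hjl : (j : ℕ) < n ∧ (l : ℕ) < n ∧ (l : ℕ) ≠ (j : ℕ) :=
        ⟨j.isLt, l.isLt, fun h => hlj (Fin.ext h)⟩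
      have hcase : (m < n ∧ m ≠ 0) ∨ (∃ r, r < n ∧ r ≠ 0 ∧ m = r + 1 * n) := by
        rcases lt_or_ge m n with h | h
        · left
          constructor
          · exact h
          · omega
        · right
          exact ⟨m - n, by omega, by omega, by omega⟩
      rcases hcase with ⟨h2, h3⟩ | ⟨r, hr1, hr2, hr3⟩
      · rw [hP0w m h3 h2, map_zero]
      · rw [hr3, hwqn, hP0w r hr2 hr1, map_zero]
  have hTS : ∀ T : Module.End k V, T ∈ S := by
    intro T
    have hT : T = ∑ p : Fin n × Fin n, (B.repr (T (b p.2)) p.1) • E p.1 p.2 := by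
      refine B.ext fun l => ?_
      rw [hBcoe]
      rw [LinearMap.sum_apply]
      simp only [LinearMap.smul_apply, hEw, smul_ite, smul_zero]
      rw [Fintype.sum_prod_type]
      simp only [Finset.sum_ite_eq, Finset.mem_univ, if_true]
      simp only [← hBcoe]
      exact (B.sum_repr _).symm
    rw [hT]
    exact Subalgebra.sum_mem _ fun p _ => Subalgebra.smul_mem _ (hES p.1 p.2) _
  have hsurj : Function.Surjective (Representation.asAlgebraHom V.ρ) := by
    intro T
    obtain ⟨f, hf⟩ := hTS T
    exact ⟨f, hf⟩
  refine ⟨hsurj, ?_⟩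
  set φ := Representation.asAlgebraHom V.ρ with hφdef
  set zz := MonoidAlgebra.of k (Heis n) ⟨0,0,1⟩ with hzzdef
  set gen := zz - algebraMap k (MonoidAlgebra k (Heis n)) ζ with hgendef
  set I := TwoSidedIdeal.span {gen} with hIdef
  have hgenI : gen ∈ I := TwoSidedIdeal.subset_span rfl
  have hsmulI : ∀ (c : k) (f : MonoidAlgebra k (Heis n)), f ∈ I → c • f ∈ I := by
    intro c f hf
    rw [Algebra.smul_def]
    exact TwoSidedIdeal.mul_mem_left _ _ _ hf
  have hzpowI : ∀ m : ℕ, zz ^ m - algebraMap k (MonoidAlgebra k (Heis n)) (ζ ^ m) ∈ I := by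
    intro m
    induction m with
    | zero =>
      simp only [pow_zero, map_one, sub_self]
      exact TwoSidedIdeal.zero_mem _
    | succ m ih =>
      have h1 : zz ^ (m+1) - algebraMap k (MonoidAlgebra k (Heis n)) (ζ ^ (m+1))
          = zz * (zz ^ m - algebraMap k (MonoidAlgebra k (Heis n)) (ζ ^ m))
            + (ζ ^ m) • gen := by
        rw [hgendef, Algebra.smul_def, mul_sub, mul_sub, Algebra.commutes, ← map_mul,
          ← pow_succ', ← pow_succ]
        abel
      rw [h1]
      exact TwoSidedIdeal.add_mem _ (TwoSidedIdeal.mul_mem_left _ _ _ ih) (hsmulI _ _ hgenI)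
  have hofI : ∀ g : Heis n, (MonoidAlgebra.of k (Heis n)) g
      - (ζ ^ (g.c - g.a * g.b).val) • (MonoidAlgebra.of k (Heis n)) ⟨g.a, g.b, g.a * g.b⟩
        ∈ I := by
    intro g
    have hg : (MonoidAlgebra.of k (Heis n)) g
        = zz ^ (g.c - g.a * g.b).val
          * (MonoidAlgebra.of k (Heis n)) ⟨g.a, g.b, g.a * g.b⟩ := by
      rw [hzzdef, ← map_pow, ← map_mul]
      congr 1
      rw [Heis.z_pow]
      ext <;> simp [ZMod.natCast_val, ZMod.cast_id]
    rw [hg]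
    have h2 := TwoSidedIdeal.mul_mem_right _ _
      ((MonoidAlgebra.of k (Heis n)) ⟨g.a, g.b, g.a * g.b⟩) (hzpowI (g.c - g.a * g.b).val)
    rwa [sub_mul, ← Algebra.smul_def] at h2
  set F : ZMod n × ZMod n → MonoidAlgebra k (Heis n) :=
    fun p => MonoidAlgebra.of k (Heis n) ⟨p.1, p.2, p.1 * p.2⟩ with hFdef
  set W := Submodule.span k (Set.range F) with hWdef
  have hdecomp : ∀ f : MonoidAlgebra k (Heis n), ∃ u ∈ W, f - u ∈ I := by
    intro f
    induction f using MonoidAlgebra.induction_on with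
    | of g =>
      refine ⟨(ζ ^ (g.c - g.a * g.b).val) • F (g.a, g.b),
        Submodule.smul_mem _ _ (Submodule.subset_span ⟨(g.a, g.b), rfl⟩), ?_⟩
      exact hofI g
    | add f g hf hg =>
      obtain ⟨u, hu, hfu⟩ := hf
      obtain ⟨u', hu', hgu⟩ := hg
      refine ⟨u + u', Submodule.add_mem _ hu hu', ?_⟩
      have h3 := TwoSidedIdeal.add_mem _ hfu hgu
      rwa [← add_sub_add_comm] at h3
    | smul c f hf =>
      obtain ⟨u, hu, hfu⟩ := hf
      refine ⟨c • u, Submodule.smul_mem _ _ hu, ?_⟩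
      rw [← smul_sub]
      exact hsmulI c _ hfu
  have hφgen : φ gen = 0 := by
    rw [hgendef, map_sub, hφdef, Representation.asAlgebraHom_of, AlgHom.commutes, hz,
      Module.algebraMap_end_eq_smul_id, sub_self]
  have hIker : ∀ f ∈ I, φ f = 0 := by
    intro f hf
    refine TwoSidedIdeal.mem_span_iff.1 hf (TwoSidedIdeal.ker φ.toRingHom) ?_
    intro x hx
    rw [Set.mem_singleton_iff] at hx
    subst hx
    exact (TwoSidedIdeal.mem_ker _).2 hφgen
  haveI : FiniteDimensional k W := FiniteDimensional.span_of_finite k (Set.finite_range F)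
  have hWle : Module.finrank k W ≤ n * n := by
    have h1 := finrank_range_le_card (R := k) F
    rw [Fintype.card_prod, ZMod.card] at h1
    exact h1
  have hEnd : Module.finrank k (Module.End k V) = n * n := by
    rw [Module.finrank_linearMap, hdim]
  set ψ : W →ₗ[k] Module.End k V := φ.toLinearMap ∘ₗ W.subtype with hψdef
  have hψsurj : Function.Surjective ψ := by
    intro T
    obtain ⟨f, hf⟩ := hsurj T
    obtain ⟨u, hu, hfu⟩ := hdecomp f
    refine ⟨⟨u, hu⟩, ?_⟩
    have h4 : φ (f - u) = 0 := hIker _ hfu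
    rw [map_sub, sub_eq_zero] at h4
    show φ u = T
    rw [← h4, hf]
  have hψinj : Function.Injective ψ := by
    have h1 := LinearMap.finrank_range_add_finrank_ker ψ
    have h2 : Module.finrank k (LinearMap.range ψ) = n * n := by
      rw [LinearMap.range_eq_top.2 hψsurj]
      rw [finrank_top]
      exact hEnd
    rw [← LinearMap.ker_eq_bot]
    refine Submodule.finrank_eq_zero.1 ?_
    omega
  refine le_antisymm (fun f hf => ?_) (fun f hf => ?_)
  · have hf0 : φ f = 0 := (TwoSidedIdeal.mem_ker _).1 hf
    obtain ⟨u, hu, hfu⟩ := hdecomp f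
    have hφu : φ u = 0 := by
      have h5 : φ (f - u) = 0 := hIker _ hfu
      rw [map_sub, hf0, zero_sub, neg_eq_zero] at h5
      exact h5
    have hu0 : (⟨u, hu⟩ : W) = 0 := hψinj (by simpa [hψdef] using hφu)
    have hu0' : u = 0 := by
      simpa using congrArg Subtype.val hu0
    rw [hu0', sub_zero] at hfu
    exact hfu
  · exact (TwoSidedIdeal.mem_ker _).2 (hIker f hf)
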